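/- arXiv:0808.0301 — 2 statements merged into one kernel-verified Lean document; each statement's English description precedes it below -/
import Mathlib

section
/- Every continuous complex-valued function on X belongs to D_X, i.e. C(X) ⊆ D_X. -/
open scoped ENNReal
open Classical
set_option linter.unusedSectionVars false
set_option synthInstance.maxHeartbeats 1000000
set_option maxHeartbeats 1000000

noncomputable section

variable {𝔞 : Type*} [Fintype 𝔞] [Nonempty 𝔞] [TopologicalSpace 𝔞] [DiscreteTopology 𝔞]

/-- The one-sided shift map on the full one-sided shift `𝔞^ℕ`. -/
def shift (x : ℕ → 𝔞) : ℕ → 𝔞 := fun n => x (n + 1)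

/-- Concatenation `u x` of a finite word `u` with an infinite sequence `x`. -/
def wcat (u : List 𝔞) (x : ℕ → 𝔞) : ℕ → 𝔞 := fun n =>
  if h : n < u.length then u.get ⟨n, h⟩ else x (n - u.length)

/-- `l∞(X)`: the C*-algebra of bounded complex-valued functions on `X`,
with pointwise operations and the supremum norm. -/
abbrev Linf (X : Set (ℕ → 𝔞)) : Type _ := lp (fun _ : X => ℂ) ∞

/-- The set `C(u,v) = {vx : x ∈ X, vx ∈ X, ux ∈ X}`. -/
def cyl (X : Set (ℕ → 𝔞)) (u v : List 𝔞) : Set (ℕ → 𝔞) :=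
  {y | ∃ x, x ∈ X ∧ wcat u x ∈ X ∧ wcat v x ∈ X ∧ y = wcat v x}

/-- The indicator function of a subset `S`, as an element of `l∞(X)`. -/
def chi (X S : Set (ℕ → 𝔞)) : Linf X :=
  ⟨fun x => S.indicator (fun _ => (1 : ℂ)) (x : ℕ → 𝔞),
    memℓp_infty ⟨1, by
      rintro r ⟨x, rfl⟩
      by_cases h : (x : ℕ → 𝔞) ∈ S <;> simp [Set.indicator_apply, h]⟩⟩

/-- `D_X`: the smallest C*-subalgebra (norm-closed, star-closed subalgebra) of `l∞(X)`
containing the indicator functions `χ_{C(u,v)}` for all words `u, v`. -/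
def Dalg (X : Set (ℕ → 𝔞)) : NonUnitalStarSubalgebra ℂ (Linf X) :=
  (NonUnitalStarAlgebra.adjoin ℂ
    {f : Linf X | ∃ u v : List 𝔞, f = chi X (cyl X u v)}).topologicalClosure

lemma chi_cyl_mem_Dalg (X : Set (ℕ → 𝔞)) (u v : List 𝔞) : chi X (cyl X u v) ∈ Dalg X :=
  (NonUnitalStarAlgebra.adjoin ℂ _).le_topologicalClosure
    (NonUnitalStarAlgebra.subset_adjoin ℂ _ ⟨u, v, rfl⟩)

-- AUX
lemma wcat_nil (x : ℕ → 𝔞) : wcat ([] : List 𝔞) x = x := by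
  funext n; simp [wcat]

lemma tail_mem {X : Set (ℕ → 𝔞)} (hXinv : ∀ x ∈ X, shift x ∈ X) {y : ℕ → 𝔞} (hy : y ∈ X)
    (m : ℕ) : (fun k => y (k + m)) ∈ X := by
  induction m with
  | zero => simpa using hy
  | succ m ih =>
      have h2 := hXinv _ ih
      have : shift (fun k => y (k + m)) = fun k => y (k + (m + 1)) := by
        funext k; exact congrArg y (by omega)
      rwa [this] at h2

lemma mem_cyl_iff {X : Set (ℕ → 𝔞)} (hXinv : ∀ x ∈ X, shift x ∈ X) {y : ℕ → 𝔞}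
    (hy : y ∈ X) (v : List 𝔞) :
    y ∈ cyl X [] v ↔ ∀ j : Fin v.length, y j = v.get j := by
  constructor
  · rintro ⟨x, hx, -, hvx, rfl⟩ j
    simp [wcat, j.isLt]
  · intro h
    set x : ℕ → 𝔞 := fun k => y (k + v.length) with hxdef
    have hx : x ∈ X := tail_mem hXinv hy v.length
    have hvxy : wcat v x = y := by
      funext n
      by_cases hn : n < v.length
      · simpa [wcat, hn] using (h ⟨n, hn⟩).symm
      · simp only [wcat, dif_neg hn, hxdef]
        exact congrArg y (by omega)
    exact ⟨x, hx, by rwa [wcat_nil], by rwa [hvxy], hvxy.symm⟩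


/-- Every continuous complex-valued function on `X` belongs to `D_X`,
i.e. `C(X) ⊆ D_X`. -/
theorem continuous_mem_Dalg (X : Set (ℕ → 𝔞)) (hXclosed : IsClosed X)
    (hXinv : ∀ x ∈ X, shift x ∈ X)
    (f : Linf X) (hf : Continuous fun x : X => f x) :
    f ∈ Dalg X := by
  haveI : CompactSpace X := isCompact_iff_compactSpace.mp hXclosed.isCompact
  -- the continuous-function version of `chi X (cyl X [] v)`
  let gmap : List 𝔞 → C(X, ℂ) := fun v =>
    ContinuousMap.comp
      ⟨fun w : Fin v.length → 𝔞 => if ∀ j : Fin v.length, w j = v.get j then (1 : ℂ) else 0,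
        continuous_of_discreteTopology⟩
      ⟨fun y : X => fun j : Fin v.length => (y : ℕ → 𝔞) j,
        continuous_pi fun j => (continuous_apply (j : ℕ)).comp continuous_subtype_val⟩
  -- the embedding of continuous functions into `l∞(X)`
  let Φ : C(X, ℂ) → Linf X := fun g =>
    ⟨fun x => g x, memℓp_infty ⟨‖g‖, by rintro r ⟨x, rfl⟩; exact g.norm_coe_le_norm x⟩⟩
  have hΦ_apply : ∀ (g : C(X, ℂ)) (x : X), (Φ g : X → ℂ) x = g x := fun g x => rfl
  have hchi_apply : ∀ (v : List 𝔞) (x : X),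
      (chi X (cyl X [] v) : X → ℂ) x
        = if ∀ j : Fin v.length, (x : ℕ → 𝔞) j = v.get j then (1 : ℂ) else 0 := by
    intro v x
    have hrfl : (chi X (cyl X [] v) : X → ℂ) x
        = (cyl X [] v).indicator (fun _ => (1 : ℂ)) (x : ℕ → 𝔞) := rfl
    rw [hrfl, Set.indicator_apply]
    by_cases h : (x : ℕ → 𝔞) ∈ cyl X [] v
    · rw [if_pos h, if_pos ((mem_cyl_iff hXinv x.2 v).mp h)]
    · rw [if_neg h, if_neg (fun hc => h ((mem_cyl_iff hXinv x.2 v).mpr hc))]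
  have hΦg : ∀ v : List 𝔞, Φ (gmap v) = chi X (cyl X [] v) := by
    intro v
    refine lp.ext (funext fun x => ?_)
    rw [hΦ_apply, hchi_apply]
    rfl
  -- the generating set
  set G : Set C(X, ℂ) := {g | ∃ v : List 𝔞, g = gmap v} with hG
  -- everything in the star algebra generated by G maps into Dalg
  have hmem : ∀ g ∈ StarAlgebra.adjoin ℂ G, Φ g ∈ Dalg X := by
    intro g hg
    induction hg using StarAlgebra.adjoin_induction with
    | mem g hgG =>
        obtain ⟨v, rfl⟩ := hgG
        rw [hΦg v]; exact chi_cyl_mem_Dalg X [] v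
    | algebraMap c =>
        have : Φ (algebraMap ℂ C(X, ℂ) c) = c • chi X (cyl X [] []) := by
          refine lp.ext (funext fun x => ?_)
          rw [lp.coeFn_smul]
          simp only [Pi.smul_apply, hchi_apply, hΦ_apply]
          simp
        rw [this]
        exact SMulMemClass.smul_mem c (chi_cyl_mem_Dalg X [] [])
    | add a b ha hb pa pb =>
        have : Φ (a + b) = Φ a + Φ b := by
          refine lp.ext (funext fun x => ?_)
          rw [lp.coeFn_add]; simp [hΦ_apply, Φ]
        rw [this]; exact add_mem pa pb
    | mul a b ha hb pa pb =>
        have : Φ (a * b) = Φ a * Φ b := by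
          refine lp.ext (funext fun x => ?_)
          rw [lp.infty_coeFn_mul]; simp [hΦ_apply, Φ]
        rw [this]; exact mul_mem pa pb
    | star a ha pa =>
        have : Φ (star a) = star (Φ a) := by
          refine lp.ext (funext fun x => ?_)
          rw [lp.coeFn_star]; simp [hΦ_apply, Φ]
        rw [this]; exact star_mem pa
  -- the generated star algebra separates points
  have hsep : (StarAlgebra.adjoin ℂ G).SeparatesPoints := by
    intro x y hxy
    have hne : ∃ i : ℕ, (x : ℕ → 𝔞) i ≠ (y : ℕ → 𝔞) i := by
      by_contra hc
      push_neg at hc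
      exact hxy (Subtype.ext (funext hc))
    obtain ⟨i, hi⟩ := hne
    set v : List 𝔞 := List.ofFn (fun j : Fin (i + 1) => (x : ℕ → 𝔞) j) with hv
    refine ⟨gmap v, ⟨gmap v, StarAlgebra.subset_adjoin ℂ G ⟨v, rfl⟩, rfl⟩, ?_⟩
    have hgx : gmap v x = 1 := by
      simp only [gmap, ContinuousMap.comp_apply, ContinuousMap.coe_mk]
      rw [if_pos]
      intro j
      rw [List.get_ofFn]
      rfl
    have hgy : gmap v y = 0 := by
      simp only [gmap, ContinuousMap.comp_apply, ContinuousMap.coe_mk]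
      rw [if_neg]
      intro hall
      have hlen : i < v.length := by simp [hv]
      have h2 := hall ⟨i, hlen⟩
      rw [List.get_ofFn] at h2
      exact hi h2.symm
    rw [hgx, hgy]; exact one_ne_zero
  -- Stone-Weierstrass
  have htop := ContinuousMap.starSubalgebra_topologicalClosure_eq_top_of_separatesPoints
    (StarAlgebra.adjoin ℂ G) hsep
  set fc : C(X, ℂ) := ⟨fun x => f x, hf⟩ with hfc
  have hfcl : fc ∈ closure ((StarAlgebra.adjoin ℂ G : StarSubalgebra ℂ C(X, ℂ)) : Set C(X, ℂ)) := by
    have : fc ∈ (StarAlgebra.adjoin ℂ G).topologicalClosure := htop ▸ trivial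
    exact this
  -- transfer to Dalg
  have hΦfc : Φ fc = f := lp.ext (funext fun x => rfl)
  have hclosed : IsClosed ((Dalg X : Set (Linf X))) :=
    NonUnitalStarSubalgebra.isClosed_topologicalClosure _
  have hfmem : f ∈ closure ((Dalg X : Set (Linf X))) := by
    rw [Metric.mem_closure_iff]
    intro ε hε
    rw [Metric.mem_closure_iff] at hfcl
    obtain ⟨g, hgS, hgd⟩ := hfcl ε hε
    refine ⟨Φ g, hmem g hgS, ?_⟩
    have hle : dist (Φ fc) (Φ g) ≤ dist fc g := by
      rw [dist_eq_norm, dist_eq_norm]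
      refine lp.norm_le_of_forall_le (norm_nonneg _) fun x => ?_
      have hx : (Φ fc - Φ g : Linf X) x = fc x - g x := by
        rw [lp.coeFn_sub]; simp [hΦ_apply, Φ]
      rw [hx]
      exact (fc - g).norm_coe_le_norm x
    calc dist f (Φ g) = dist (Φ fc) (Φ g) := by rw [hΦfc]
      _ ≤ dist fc g := hle
      _ < ε := hgd
  exact hclosed.closure_subset hfmem


end
end

section
/- Let (φ, (t_u)_{u∈𝔞*}) be a representation of X on a C*-algebra A, and for n ∈ ℕ let g_n ∈ l∞(X) be the function g_n(x) = #σ⁻ⁿ({σⁿ(x)}) (the number of y ∈ X with σⁿ(y) = σⁿ(x)). Then g_n belongs to D_X, g_n is invertible in D_X (with inverse the pointwise reciprocal), and Σ_{u,v∈𝔞ⁿ} t_u t_v* t_v t_u* = φ(g_n). -/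
open scoped ENNReal
open Classical
set_option linter.unusedSectionVars false
set_option synthInstance.maxHeartbeats 1000000
set_option maxHeartbeats 1000000

noncomputable section

variable {𝔞 : Type*} [Fintype 𝔞] [Nonempty 𝔞] [TopologicalSpace 𝔞] [DiscreteTopology 𝔞]

lemma shift_iterate (n : ℕ) (x : ℕ → 𝔞) : shift^[n] x = fun m => x (m + n) := by
  induction n with
  | zero => funext m; simp
  | succ k ih =>
    rw [Function.iterate_succ_apply', ih]
    funext m
    simp only [shift]
    congr 1
    omega

/-- The set `σ⁻ⁿ({σⁿ(x)})` of points of `X` with the same `n`-th shift as `x`. -/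
def sigPre (X : Set (ℕ → 𝔞)) (n : ℕ) (x : ℕ → 𝔞) : Set X :=
  {y : X | shift^[n] (y : ℕ → 𝔞) = shift^[n] x}

lemma sigPre_ncard_le (X : Set (ℕ → 𝔞)) (n : ℕ) (x : ℕ → 𝔞) :
    (sigPre X n x).ncard ≤ Fintype.card (Fin n → 𝔞) := by
  have hinj : Set.InjOn (fun y : X => fun i : Fin n => (y : ℕ → 𝔞) (i : ℕ)) (sigPre X n x) := by
    intro y hy z hz hyz
    apply Subtype.ext
    funext m
    rcases lt_or_ge m n with hm | hm
    · exact congrFun hyz ⟨m, hm⟩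
    · have hy' : shift^[n] (y : ℕ → 𝔞) = shift^[n] x := hy
      have hz' : shift^[n] (z : ℕ → 𝔞) = shift^[n] x := hz
      have e := hy'.trans hz'.symm
      rw [shift_iterate, shift_iterate] at e
      have h1 := congrFun e (m - n)
      try simp only at h1
      rwa [Nat.sub_add_cancel hm] at h1
  calc (sigPre X n x).ncard ≤ (Set.univ : Set (Fin n → 𝔞)).ncard :=
        Set.ncard_le_ncard_of_injOn _ (fun y _ => Set.mem_univ _) hinj Set.finite_univ
  _ = Fintype.card (Fin n → 𝔞) := by rw [Set.ncard_univ, Nat.card_eq_fintype_card]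

/-- The function `g_n(x) = #σ⁻ⁿ({σⁿ(x)})`, as an element of `l∞(X)`. -/
def gnFun (X : Set (ℕ → 𝔞)) (n : ℕ) : Linf X :=
  ⟨fun x => ((sigPre X n (x : ℕ → 𝔞)).ncard : ℂ),
    memℓp_infty ⟨(Fintype.card (Fin n → 𝔞) : ℝ), by
      rintro r ⟨x, rfl⟩
      dsimp only
      rw [Complex.norm_natCast]
      exact_mod_cast sigPre_ncard_le X n x⟩⟩

/-- The pointwise reciprocal `x ↦ (#σ⁻ⁿ({σⁿ(x)}))⁻¹`, as an element of `l∞(X)`. -/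
def gnInvFun (X : Set (ℕ → 𝔞)) (n : ℕ) : Linf X :=
  ⟨fun x => (((sigPre X n (x : ℕ → 𝔞)).ncard : ℂ))⁻¹,
    memℓp_infty ⟨1, by
      rintro r ⟨x, rfl⟩
      dsimp only
      rw [norm_inv, Complex.norm_natCast]
      rcases Nat.eq_zero_or_pos (sigPre X n (x : ℕ → 𝔞)).ncard with h | h
      · simp [h]
      · rw [inv_le_one_iff₀]
        right
        exact_mod_cast h⟩⟩


lemma wcat_ofFn_lt {n : ℕ} (c : Fin n → 𝔞) (x : ℕ → 𝔞) {m : ℕ} (h : m < n) :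
    wcat (List.ofFn c) x m = c ⟨m, h⟩ := by
  have h' : m < (List.ofFn c).length := by simpa using h
  simp only [wcat, dif_pos h', List.get_ofFn]
  exact congrArg c (Fin.ext rfl)

lemma wcat_ofFn_ge {n : ℕ} (c : Fin n → 𝔞) (x : ℕ → 𝔞) {m : ℕ} (h : n ≤ m) :
    wcat (List.ofFn c) x m = x (m - n) := by
  simp [wcat, Nat.not_lt.2 h]

lemma shiftIter_wcat_ofFn {n : ℕ} (c : Fin n → 𝔞) (x : ℕ → 𝔞) :
    shift^[n] (wcat (List.ofFn c) x) = x := by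
  funext m
  rw [shift_iterate]
  show wcat (List.ofFn c) x (m + n) = x m
  rw [wcat_ofFn_ge c x (Nat.le_add_left n m)]
  congr 1
  omega

lemma wcat_ofFn_prefix {n : ℕ} (x : ℕ → 𝔞) :
    wcat (List.ofFn fun i : Fin n => x i) (shift^[n] x) = x := by
  funext m
  rcases lt_or_ge m n with h | h
  · rw [wcat_ofFn_lt _ _ h]
  · rw [wcat_ofFn_ge _ _ h, shift_iterate]
    show x (m - n + n) = x m
    congr 1
    omega

lemma shiftIter_mem (X : Set (ℕ → 𝔞)) (hXinv : ∀ x ∈ X, shift x ∈ X) (n : ℕ) :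
    ∀ x ∈ X, shift^[n] x ∈ X := by
  induction n with
  | zero => intro x hx; simpa using hx
  | succ k ih =>
    intro x hx
    rw [Function.iterate_succ_apply']
    exact hXinv _ (ih x hx)

lemma mem_cyl_ofFn_iff (X : Set (ℕ → 𝔞)) (hXinv : ∀ x ∈ X, shift x ∈ X) {n : ℕ}
    (u : List 𝔞) (d : Fin n → 𝔞) {x : ℕ → 𝔞} (hx : x ∈ X) :
    x ∈ cyl X u (List.ofFn d) ↔ (d = fun i : Fin n => x (i : ℕ)) ∧ wcat u (shift^[n] x) ∈ X := by
  constructor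
  · rintro ⟨z, hz, hu, hv, rfl⟩
    have hzeq : shift^[n] (wcat (List.ofFn d) z) = z := shiftIter_wcat_ofFn d z
    refine ⟨funext fun i : Fin n => (wcat_ofFn_lt d z i.isLt).symm, ?_⟩
    rw [hzeq]; exact hu
  · rintro ⟨rfl, hu⟩
    exact ⟨shift^[n] x, shiftIter_mem X hXinv n x hx, hu,
      by rw [wcat_ofFn_prefix]; exact hx, (wcat_ofFn_prefix x).symm⟩

lemma sigPre_injOn (X : Set (ℕ → 𝔞)) (n : ℕ) (x : ℕ → 𝔞) :
    Set.InjOn (fun y : X => fun i : Fin n => (y : ℕ → 𝔞) (i : ℕ)) (sigPre X n x) := by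
  intro y hy z hz hyz
  apply Subtype.ext
  funext m
  rcases lt_or_ge m n with hm | hm
  · exact congrFun hyz ⟨m, hm⟩
  · have hy' : shift^[n] (y : ℕ → 𝔞) = shift^[n] x := hy
    have hz' : shift^[n] (z : ℕ → 𝔞) = shift^[n] x := hz
    have e := hy'.trans hz'.symm
    rw [shift_iterate, shift_iterate] at e
    have h1 := congrFun e (m - n)
    rwa [Nat.sub_add_cancel hm] at h1

lemma sigPre_finite (X : Set (ℕ → 𝔞)) (n : ℕ) (x : ℕ → 𝔞) :
    (sigPre X n x).Finite :=
  Set.Finite.of_finite_image (Set.toFinite _) (sigPre_injOn X n x)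

lemma sigPre_ncard_pos (X : Set (ℕ → 𝔞)) (n : ℕ) (x : X) :
    0 < (sigPre X n (x : ℕ → 𝔞)).ncard :=
  (Set.ncard_pos (sigPre_finite X n x)).2 ⟨x, rfl⟩

lemma ncard_sigPre_eq (X : Set (ℕ → 𝔞)) (n : ℕ) {x : ℕ → 𝔞} (hx : x ∈ X) :
    (((sigPre X n x).ncard : ℂ)) =
      ∑ c : Fin n → 𝔞, if wcat (List.ofFn c) (shift^[n] x) ∈ X then (1 : ℂ) else 0 := by
  classical
  set F : (Fin n → 𝔞) → (ℕ → 𝔞) := fun c => wcat (List.ofFn c) (shift^[n] x) with hF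
  have hFinj : Function.Injective F := by
    intro c c' h
    funext i
    have h2 := congrFun h (i : ℕ)
    exact (wcat_ofFn_lt c _ i.isLt).symm.trans
      (h2.trans (wcat_ofFn_lt c' _ i.isLt))
  have himg : Subtype.val '' sigPre X n x = F '' {c | F c ∈ X} := by
    ext y
    constructor
    · rintro ⟨w, hw, rfl⟩
      have hw' : shift^[n] (w : ℕ → 𝔞) = shift^[n] x := hw
      have key : F (fun i => (w : ℕ → 𝔞) (i : ℕ)) = (w : ℕ → 𝔞) := by
        rw [hF]
        dsimp only
        rw [← hw']
        exact wcat_ofFn_prefix _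
      exact ⟨fun i => (w : ℕ → 𝔞) (i : ℕ), by rw [Set.mem_setOf_eq, key]; exact w.2, key⟩
    · rintro ⟨c, hc, rfl⟩
      exact ⟨⟨F c, hc⟩, shiftIter_wcat_ofFn c _, rfl⟩
  have hcount : (sigPre X n x).ncard = {c | F c ∈ X}.ncard := by
    calc (sigPre X n x).ncard
        = (Subtype.val '' sigPre X n x).ncard :=
          (Set.ncard_image_of_injective _ Subtype.val_injective).symm
      _ = (F '' {c | F c ∈ X}).ncard := by rw [himg]
      _ = {c | F c ∈ X}.ncard := Set.ncard_image_of_injective _ hFinj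
  rw [hcount, Finset.sum_boole]
  congr 1
  rw [Set.ncard_eq_toFinset_card', Set.toFinset_setOf]

lemma lp_infty_coeFn_prod {ι : Type*} (X : Set (ℕ → 𝔞)) (s : Finset ι) (f : ι → Linf X) :
    ⇑(∏ i ∈ s, f i) = ∏ i ∈ s, ⇑(f i) := by
  classical
  induction s using Finset.induction with
  | empty => simp [lp.infty_coeFn_one]
  | insert a s h ih => rw [Finset.prod_insert h, Finset.prod_insert h, lp.infty_coeFn_mul, ih]

lemma lagrange_eval (N m : ℕ) (hm1 : 1 ≤ m) (hmN : m ≤ N) :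
    ∑ k ∈ Finset.Icc 1 N, ((k : ℂ))⁻¹ *
      ∏ j ∈ (Finset.Icc 1 N).erase k, (((k : ℂ) - (j : ℂ))⁻¹ * ((m : ℂ) - (j : ℂ)))
    = ((m : ℂ))⁻¹ := by
  have hmem : m ∈ Finset.Icc 1 N := Finset.mem_Icc.2 ⟨hm1, hmN⟩
  rw [Finset.sum_eq_single m]
  · have hprod : ∏ j ∈ (Finset.Icc 1 N).erase m,
        (((m : ℂ) - (j : ℂ))⁻¹ * ((m : ℂ) - (j : ℂ))) = 1 := by
      apply Finset.prod_eq_one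
      intro j hj
      have hjm : j ≠ m := Finset.ne_of_mem_erase hj
      have hne : ((m : ℂ) - (j : ℂ)) ≠ 0 := by
        rw [sub_ne_zero]
        exact_mod_cast hjm.symm
      exact inv_mul_cancel₀ hne
    rw [hprod, mul_one]
  · intro k hk hkm
    have hmem' : m ∈ (Finset.Icc 1 N).erase k := Finset.mem_erase.2 ⟨hkm.symm, hmem⟩
    rw [Finset.prod_eq_zero hmem' (by simp), mul_zero]
  · intro h; exact absurd hmem h

lemma gnFun_eq_sum (X : Set (ℕ → 𝔞)) (hXinv : ∀ x ∈ X, shift x ∈ X) (n : ℕ) :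
    gnFun X n = ∑ c : Fin n → 𝔞, ∑ d : Fin n → 𝔞,
      chi X (cyl X (List.ofFn d) (List.ofFn c)) := by
  classical
  apply lp.ext
  funext x
  have hchi : ∀ c d : Fin n → 𝔞,
      (chi X (cyl X (List.ofFn d) (List.ofFn c)) : X → ℂ) x
        = if (c = fun i : Fin n => (x : ℕ → 𝔞) (i : ℕ)) ∧
            wcat (List.ofFn d) (shift^[n] (x : ℕ → 𝔞)) ∈ X then 1 else 0 := by
    intro c d
    show (cyl X (List.ofFn d) (List.ofFn c)).indicator (fun _ => (1 : ℂ)) (x : ℕ → 𝔞) = _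
    rw [Set.indicator_apply]
    simp only [mem_cyl_ofFn_iff X hXinv (List.ofFn d) c x.2]
  show ((sigPre X n (x : ℕ → 𝔞)).ncard : ℂ) = _
  rw [lp.coeFn_sum]
  rw [Finset.sum_apply]
  have hsa : ∀ c : Fin n → 𝔞,
      (⇑(∑ d : Fin n → 𝔞, chi X (cyl X (List.ofFn d) (List.ofFn c)))) x
        = ∑ d : Fin n → 𝔞, (chi X (cyl X (List.ofFn d) (List.ofFn c)) : X → ℂ) x := by
    intro c
    rw [lp.coeFn_sum, Finset.sum_apply]
  simp only [hsa, hchi]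
  rw [ncard_sigPre_eq X n x.2, Finset.sum_comm]
  simp [ite_and]

/-- for a representation `(φ, (t_u)_u)` of `X` on a C*-algebra `A` and
`n ∈ ℕ`, the function `g_n(x) = #σ⁻ⁿ({σⁿ(x)})` belongs to `D_X`, is invertible in `D_X`
with inverse the pointwise reciprocal, and `Σ_{u,v∈𝔞ⁿ} t_u t_v* t_v t_u* = φ(g_n)`
(words of length `n` are parametrized by `Fin n → 𝔞` via `List.ofFn`). -/
theorem rep_gn (X : Set (ℕ → 𝔞)) (hXclosed : IsClosed X)
    (hXinv : ∀ x ∈ X, shift x ∈ X)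
    {A : Type*} [NormedRing A] [StarRing A] [CStarRing A] [NormedAlgebra ℂ A]
    [StarModule ℂ A] [CompleteSpace A]
    (φ : Dalg X →⋆ₙₐ[ℂ] A) (t : List 𝔞 → A)
    (hmul : ∀ u v : List 𝔞, t u * t v = t (u ++ v))
    (hrep : ∀ u v : List 𝔞,
      φ ⟨chi X (cyl X u v), chi_cyl_mem_Dalg X u v⟩ = t v * star (t u) * (t u * star (t v)))
    (n : ℕ) :
    ∃ (hg : gnFun X n ∈ Dalg X) (_ : gnInvFun X n ∈ Dalg X),
      gnFun X n * gnInvFun X n = 1 ∧ gnInvFun X n * gnFun X n = 1 ∧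
      ∑ c : Fin n → 𝔞, ∑ d : Fin n → 𝔞,
          t (List.ofFn c) * star (t (List.ofFn d)) * (t (List.ofFn d) * star (t (List.ofFn c)))
        = φ ⟨gnFun X n, hg⟩ := by
  classical
  have hsum := gnFun_eq_sum X hXinv n
  have hg : gnFun X n ∈ Dalg X := by
    rw [hsum]
    exact sum_mem fun c _ => sum_mem fun d _ => chi_cyl_mem_Dalg X _ _
  have hone : (1 : Linf X) ∈ Dalg X := by
    have hw : ∀ z : ℕ → 𝔞, wcat ([] : List 𝔞) z = z := by
      intro z; funext m; simp [wcat]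
    have hcyl : cyl X ([] : List 𝔞) [] = X := by
      ext y
      constructor
      · rintro ⟨z, hz, -, -, rfl⟩; rwa [hw]
      · intro hy; exact ⟨y, hy, by rwa [hw], by rwa [hw], (hw y).symm⟩
    have hchi1 : chi X (cyl X ([] : List 𝔞) []) = 1 := by
      apply lp.ext
      rw [lp.infty_coeFn_one]
      funext x
      show (cyl X ([] : List 𝔞) []).indicator (fun _ => (1 : ℂ)) (x : ℕ → 𝔞) = 1
      rw [hcyl, Set.indicator_of_mem x.2]
    exact hchi1 ▸ chi_cyl_mem_Dalg X [] []
  set N := Fintype.card (Fin n → 𝔞) with hN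
  set q : Linf X := ∑ k ∈ Finset.Icc 1 N, ((k : ℂ))⁻¹ •
      ∏ j ∈ (Finset.Icc 1 N).erase k,
        (((k : ℂ) - (j : ℂ))⁻¹ • (gnFun X n - (j : ℂ) • (1 : Linf X))) with hq
  have hq_mem : q ∈ Dalg X := by
    refine sum_mem fun k _ => SMulMemClass.smul_mem _ ?_
    refine Finset.prod_induction _ (· ∈ Dalg X) (fun a b ha hb => mul_mem ha hb) hone ?_
    intro j _
    exact SMulMemClass.smul_mem _ (sub_mem hg (SMulMemClass.smul_mem _ hone))
  have hq_eq : gnInvFun X n = q := by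
    apply lp.ext
    funext x
    have hgx : (⇑(gnFun X n) : X → ℂ) x = ((sigPre X n (x : ℕ → 𝔞)).ncard : ℂ) := rfl
    have hqx : (⇑q : X → ℂ) x = ∑ k ∈ Finset.Icc 1 N, ((k : ℂ))⁻¹ *
        ∏ j ∈ (Finset.Icc 1 N).erase k,
          (((k : ℂ) - (j : ℂ))⁻¹ * (((sigPre X n (x : ℕ → 𝔞)).ncard : ℂ) - (j : ℂ))) := by
      rw [hq, lp.coeFn_sum, Finset.sum_apply]
      refine Finset.sum_congr rfl fun k _ => ?_
      rw [lp.coeFn_smul, Pi.smul_apply, smul_eq_mul, lp_infty_coeFn_prod, Finset.prod_apply]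
      refine congrArg _ (Finset.prod_congr rfl fun j _ => ?_)
      rw [lp.coeFn_smul, Pi.smul_apply, smul_eq_mul, lp.coeFn_sub, Pi.sub_apply,
        lp.coeFn_smul, Pi.smul_apply, smul_eq_mul, lp.infty_coeFn_one, Pi.one_apply,
        mul_one, hgx]
    show ((((sigPre X n (x : ℕ → 𝔞)).ncard : ℂ)))⁻¹ = (⇑q : X → ℂ) x
    rw [hqx]
    exact (lagrange_eval N _ (sigPre_ncard_pos X n x) (sigPre_ncard_le X n (x : ℕ → 𝔞))).symm
  have hinv_mem : gnInvFun X n ∈ Dalg X := by rw [hq_eq]; exact hq_mem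
  have hne : ∀ x : X, ((sigPre X n (x : ℕ → 𝔞)).ncard : ℂ) ≠ 0 := fun x =>
    Nat.cast_ne_zero.2 (sigPre_ncard_pos X n x).ne'
  have hmul1 : gnFun X n * gnInvFun X n = 1 := by
    apply lp.ext
    rw [lp.infty_coeFn_mul, lp.infty_coeFn_one]
    funext x
    rw [Pi.mul_apply, Pi.one_apply]
    exact mul_inv_cancel₀ (hne x)
  have hmul2 : gnInvFun X n * gnFun X n = 1 := by
    apply lp.ext
    rw [lp.infty_coeFn_mul, lp.infty_coeFn_one]
    funext x
    rw [Pi.mul_apply, Pi.one_apply]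
    exact inv_mul_cancel₀ (hne x)
  refine ⟨hg, hinv_mem, hmul1, hmul2, ?_⟩
  have helem : (⟨gnFun X n, hg⟩ : Dalg X) = ∑ c : Fin n → 𝔞, ∑ d : Fin n → 𝔞,
      (⟨chi X (cyl X (List.ofFn d) (List.ofFn c)), chi_cyl_mem_Dalg X _ _⟩ : Dalg X) := by
    apply Subtype.ext
    simp only [AddSubmonoidClass.coe_finset_sum]
    exact hsum
  calc ∑ c : Fin n → 𝔞, ∑ d : Fin n → 𝔞,
        t (List.ofFn c) * star (t (List.ofFn d)) * (t (List.ofFn d) * star (t (List.ofFn c)))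
      = ∑ c : Fin n → 𝔞, ∑ d : Fin n → 𝔞,
          φ ⟨chi X (cyl X (List.ofFn d) (List.ofFn c)), chi_cyl_mem_Dalg X _ _⟩ :=
        Finset.sum_congr rfl fun c _ => Finset.sum_congr rfl fun d _ =>
          (hrep (List.ofFn d) (List.ofFn c)).symm
    _ = φ (∑ c : Fin n → 𝔞, ∑ d : Fin n → 𝔞,
          (⟨chi X (cyl X (List.ofFn d) (List.ofFn c)), chi_cyl_mem_Dalg X _ _⟩ : Dalg X)) := by
        rw [map_sum]
        exact Finset.sum_congr rfl fun c _ => (map_sum φ _ _).symm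
    _ = φ ⟨gnFun X n, hg⟩ := by rw [← helem]


end
end
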